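/- Let r₀ > 0, let a < 0, let δ₀ ∈ (0,1) and let C₀ > 0. Let A, B : (0,r₀) → ℝ be continuous with A(r) → a as r → 0+ and |B(r)| ≤ C₀·r^{δ₀−1} for all 0 < r < r₀. Let w : (0,r₀) → ℝ be differentiable with w'(r) = A(r)·w(r)/r + B(r) for all 0 < r < r₀, and suppose w(r) → 0 as r → 0+. Then there exist constants δ > 0, C > 0 and 0 < r₁ ≤ r₀ such that |w(r)| ≤ C·r^{δ} for all 0 < r < r₁. -/

import Mathlib

open Filter Topology Set

/-- Barrier lemma: one-sided bound `w r ≤ C * r ^ δ`. -/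
lemma aux_barrier (ε δ C C₀ r₁ : ℝ) (hε : 0 < ε) (hδ : 0 < δ) (hC : 0 < C)
    (hCε : C₀ ≤ C * ε)
    (A B w : ℝ → ℝ)
    (hA : ∀ r ∈ Ioo (0:ℝ) r₁, A r ≤ -ε)
    (hB : ∀ r ∈ Ioo (0:ℝ) r₁, B r ≤ C₀ * r ^ (δ - 1))
    (hw : ∀ r ∈ Ioo (0:ℝ) r₁, HasDerivAt w (A r * w r / r + B r) r)
    (hw0 : Tendsto w (𝓝[>] 0) (𝓝 0)) :
    ∀ r ∈ Ioo (0:ℝ) r₁, w r ≤ C * r ^ δ := by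
  -- the comparison function
  have hu : ∀ r ∈ Ioo (0:ℝ) r₁,
      HasDerivAt (fun r => w r - C * r ^ δ)
        (A r * w r / r + B r - C * (δ * r ^ (δ - 1))) r := by
    intro r hr
    exact (hw r hr).sub ((Real.hasDerivAt_rpow_const (Or.inl hr.1.ne')).const_mul C)
  have hu0 : Tendsto (fun r => w r - C * r ^ δ) (𝓝[>] 0) (𝓝 0) := by
    have h2 : Tendsto (fun r : ℝ => r ^ δ) (𝓝 0) (𝓝 ((0:ℝ) ^ δ)) :=
      (Real.continuousAt_rpow_const 0 δ (Or.inr hδ.le)).tendsto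
    rw [Real.zero_rpow hδ.ne'] at h2
    have h1 : Tendsto (fun r : ℝ => C * r ^ δ) (𝓝[>] (0:ℝ)) (𝓝 (C * 0)) :=
      Tendsto.mono_left (h2.const_mul C) nhdsWithin_le_nhds
    rw [mul_zero] at h1
    simpa using hw0.sub h1
  intro r hr
  by_contra hcon
  push_neg at hcon
  obtain ⟨u, hu_def⟩ : ∃ u : ℝ → ℝ, u = fun s => w s - C * s ^ δ := ⟨_, rfl⟩
  rw [← hu_def] at hu hu0
  have hur : 0 < u r := by simp only [hu_def]; linarith
  have hS_ne : {s : ℝ | s ∈ Ioc (0:ℝ) r ∧ u s ≤ u r / 2}.Nonempty := by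
    have h1 : ∀ᶠ s in 𝓝[>] (0:ℝ), u s < u r / 2 :=
      hu0.eventually_lt_const (by linarith)
    have h2 : Ioo (0:ℝ) r ∈ 𝓝[>] (0:ℝ) :=
      Ioo_mem_nhdsGT_of_mem ⟨le_refl 0, hr.1⟩
    obtain ⟨s, hs1, hs2⟩ := (h1.and (eventually_of_mem h2 fun x hx => hx)).exists
    exact ⟨s, ⟨hs2.1, hs2.2.le⟩, hs1.le⟩
  have hS_bdd : BddAbove {s : ℝ | s ∈ Ioc (0:ℝ) r ∧ u s ≤ u r / 2} :=
    ⟨r, fun s hs => hs.1.2⟩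
  obtain ⟨s₀, hs₀⟩ := id hS_ne
  have hts₀ : s₀ ≤ sSup {s : ℝ | s ∈ Ioc (0:ℝ) r ∧ u s ≤ u r / 2} := le_csSup hS_bdd hs₀
  have ht_pos : 0 < sSup {s : ℝ | s ∈ Ioc (0:ℝ) r ∧ u s ≤ u r / 2} :=
    lt_of_lt_of_le hs₀.1.1 hts₀
  have ht_le : sSup {s : ℝ | s ∈ Ioc (0:ℝ) r ∧ u s ≤ u r / 2} ≤ r :=
    csSup_le hS_ne fun s hs => hs.1.2
  generalize htdef : sSup {s : ℝ | s ∈ Ioc (0:ℝ) r ∧ u s ≤ u r / 2} = t at hts₀ ht_pos ht_le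
  have ht_mem : t ∈ Ioo (0:ℝ) r₁ := ⟨ht_pos, lt_of_le_of_lt ht_le hr.2⟩
  have htcl : t ∈ closure {s : ℝ | s ∈ Ioc (0:ℝ) r ∧ u s ≤ u r / 2} :=
    htdef ▸ csSup_mem_closure hS_ne hS_bdd
  haveI hnb : (𝓝[{s : ℝ | s ∈ Ioc (0:ℝ) r ∧ u s ≤ u r / 2}] t).NeBot :=
    mem_closure_iff_nhdsWithin_neBot.mp htcl
  have hut : u t ≤ u r / 2 := by
    have hct : ContinuousWithinAt u {s : ℝ | s ∈ Ioc (0:ℝ) r ∧ u s ≤ u r / 2} t :=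
      (hu t ht_mem).continuousAt.continuousWithinAt
    exact le_of_tendsto hct (eventually_nhdsWithin_of_forall fun s hs => hs.2)
  have htr : t < r := lt_of_le_of_ne ht_le (by rintro rfl; linarith)
  have hanti : StrictAntiOn u (Icc t r) := by
    apply strictAntiOn_of_deriv_neg (convex_Icc t r)
    · intro x hx
      have hx01 : x ∈ Ioo (0:ℝ) r₁ :=
        ⟨lt_of_lt_of_le ht_pos hx.1, lt_of_le_of_lt hx.2 hr.2⟩
      exact (hu x hx01).continuousAt.continuousWithinAt
    · intro x hx
      rw [interior_Icc] at hx
      have hx01 : x ∈ Ioo (0:ℝ) r₁ :=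
        ⟨lt_of_lt_of_le ht_pos hx.1.le, lt_of_le_of_lt hx.2.le hr.2⟩
      have hxS : ¬ (u x ≤ u r / 2) := by
        intro hle
        have : x ≤ t := htdef ▸ le_csSup hS_bdd ⟨⟨hx01.1, hx.2.le⟩, hle⟩
        exact absurd hx.1 (not_lt.mpr this)
      push_neg at hxS
      have hux : 0 < u x := lt_trans (by linarith) hxS
      have hwx : C * x ^ δ < w x := by simp only [hu_def] at hux; linarith
      have hxpow_pos : 0 < x ^ (δ - 1) := Real.rpow_pos_of_pos hx01.1 _
      have hxpow_pos' : 0 < x ^ δ := Real.rpow_pos_of_pos hx01.1 _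
      rw [(hu x hx01).deriv]
      have hAx : A x ≤ -ε := hA x hx01
      have hwx_nonneg : 0 ≤ w x := le_trans (by positivity) hwx.le
      have h1 : A x * w x ≤ -ε * (C * x ^ δ) := by
        calc A x * w x ≤ -ε * w x := mul_le_mul_of_nonneg_right hAx hwx_nonneg
        _ ≤ -ε * (C * x ^ δ) := by nlinarith
      have hpow_div : x ^ δ / x = x ^ (δ - 1) := by
        rw [Real.rpow_sub hx01.1, Real.rpow_one]
      have h2 : A x * w x / x ≤ -(ε * C) * x ^ (δ - 1) := by
        have h2' : A x * w x / x ≤ (-ε * (C * x ^ δ)) / x := by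
          gcongr
          exact hx01.1.le
        calc A x * w x / x ≤ (-ε * (C * x ^ δ)) / x := h2'
        _ = -(ε * C) * (x ^ δ / x) := by ring
        _ = -(ε * C) * x ^ (δ - 1) := by rw [hpow_div]
      have h3 : B x ≤ C * ε * x ^ (δ - 1) := by
        calc B x ≤ C₀ * x ^ (δ - 1) := hB x hx01
        _ ≤ C * ε * x ^ (δ - 1) := mul_le_mul_of_nonneg_right hCε hxpow_pos.le
      nlinarith [mul_pos (mul_pos hC hδ) hxpow_pos]
  have hfinal : u r < u t := hanti ⟨le_refl t, ht_le⟩ ⟨htr.le, le_refl r⟩ htr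
  exact lt_irrefl _ (hfinal.trans_le (hut.trans (half_lt_self hur).le))

theorem stmt_6
    (r₀ a δ₀ C₀ : ℝ) (hr₀ : 0 < r₀) (ha : a < 0)
    (hδ₀ : 0 < δ₀ ∧ δ₀ < 1) (hC₀ : 0 < C₀)
    (A B w : ℝ → ℝ)
    (hA : ContinuousOn A (Ioo 0 r₀))
    (hB : ContinuousOn B (Ioo 0 r₀))
    (hAa : Tendsto A (𝓝[>] 0) (𝓝 a))
    (hBbound : ∀ r : ℝ, 0 < r → r < r₀ → |B r| ≤ C₀ * r ^ (δ₀ - 1))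
    (hw : ∀ r : ℝ, 0 < r → r < r₀ → HasDerivAt w (A r * w r / r + B r) r)
    (hw0 : Tendsto w (𝓝[>] 0) (𝓝 0)) :
    ∃ δ : ℝ, 0 < δ ∧ ∃ C : ℝ, 0 < C ∧ ∃ r₁ : ℝ, 0 < r₁ ∧ r₁ ≤ r₀ ∧
      ∀ r : ℝ, 0 < r → r < r₁ → |w r| ≤ C * r ^ δ := by
  set ε : ℝ := -a / 2 with hε_def
  have hε : 0 < ε := by linarith
  have haε : a < -ε := by simp only [hε_def]; linarith
  -- find r₁' where A < -ε
  have hev : ∀ᶠ s in 𝓝[>] (0:ℝ), A s < -ε := hAa.eventually_lt_const haε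
  obtain ⟨r₁', hr₁'pos, hr₁'sub⟩ := mem_nhdsGT_iff_exists_Ioo_subset.mp hev
  set r₁ : ℝ := min r₁' r₀ with hr₁_def
  have hr₁pos : 0 < r₁ := lt_min hr₁'pos hr₀
  have hr₁le : r₁ ≤ r₀ := min_le_right _ _
  set C : ℝ := C₀ / ε + 1 with hC_def
  have hC : 0 < C := by positivity
  have hCε : C₀ ≤ C * ε := by
    rw [hC_def]
    field_simp
    nlinarith
  have hsub : Ioo (0:ℝ) r₁ ⊆ Ioo 0 r₀ := Ioo_subset_Ioo le_rfl hr₁le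
  have hA' : ∀ r ∈ Ioo (0:ℝ) r₁, A r ≤ -ε := fun r hr =>
    (hr₁'sub ⟨hr.1, lt_of_lt_of_le hr.2 (min_le_left _ _)⟩).le
  refine ⟨δ₀, hδ₀.1, C, hC, r₁, hr₁pos, hr₁le, ?_⟩
  have hup : ∀ r ∈ Ioo (0:ℝ) r₁, w r ≤ C * r ^ δ₀ := by
    apply aux_barrier ε δ₀ C C₀ r₁ hε hδ₀.1 hC hCε A B w hA'
    · intro r hr
      exact le_trans (le_abs_self _) (hBbound r hr.1 (lt_of_lt_of_le hr.2 hr₁le))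
    · intro r hr
      exact hw r hr.1 (lt_of_lt_of_le hr.2 hr₁le)
    · exact hw0
  have hdown : ∀ r ∈ Ioo (0:ℝ) r₁, -w r ≤ C * r ^ δ₀ := by
    apply aux_barrier ε δ₀ C C₀ r₁ hε hδ₀.1 hC hCε A (fun r => -B r) (fun r => -w r) hA'
    · intro r hr
      exact le_trans (neg_le_abs _) (hBbound r hr.1 (lt_of_lt_of_le hr.2 hr₁le))
    · intro r hr
      have : HasDerivAt (fun r => -w r) (-(A r * w r / r + B r)) r := (hw r hr.1 (lt_of_lt_of_le hr.2 hr₁le)).neg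
      convert this using 1
      ring
    · simpa using hw0.neg
  intro r hrpos hrlt
  rw [abs_le]
  constructor
  · linarith [hdown r ⟨hrpos, hrlt⟩]
  · exact hup r ⟨hrpos, hrlt⟩
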